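/- For every natural number n, parameters u_ℓ = (θ_ℓ, φ_ℓ, λ_ℓ) ∈ ℝ³ for ℓ = 0,…,n−1, every coin value k ∈ ZMod 2, and all n-bit strings J' and J, the matrix entry of the squared walk operator satisfies (U²)_{(k,J'),(0,J)} = ∑_{I : I_{n−1} = k} f(I, I ⊕ J' ⊕ J), where the sum is over all n-bit strings I whose (n−1)-th bit equals k, and f(I,K) := (∏_{ℓ=0}^{n−1} [U3(u_ℓ)]_{I_ℓ, I_{ℓ−1}}) · (∏_{ℓ=0}^{n−1} [U3(u_ℓ)]_{K_ℓ, K_{ℓ−1}}) with the conventions I_{−1} = K_{n−1} and K_{−1} = 0. -/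

import Mathlib

/-- The single-qubit rotation gate `U3(θ,φ,λ)`, indexed by `ZMod 2`. -/
noncomputable def U3 (θ φ lam : ℝ) : Matrix (ZMod 2) (ZMod 2) ℂ :=
  Matrix.of fun μ ν =>
    if μ = 0 then
      (if ν = 0 then (Real.cos (θ / 2) : ℂ)
       else -Complex.exp (Complex.I * lam) * (Real.sin (θ / 2) : ℂ))
    else
      (if ν = 0 then Complex.exp (Complex.I * φ) * (Real.sin (θ / 2) : ℂ)
       else Complex.exp (Complex.I * (lam + φ)) * (Real.cos (θ / 2) : ℂ))

/-- Coin rotation: `U3` acting on the coin qubit, identity on the graph qubits. -/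
noncomputable def coinR (n : ℕ) (u : ℝ × ℝ × ℝ) :
    Matrix (ZMod 2 × (Fin n → ZMod 2)) (ZMod 2 × (Fin n → ZMod 2)) ℂ :=
  Matrix.of fun p q => if p.2 = q.2 then U3 u.1 u.2.1 u.2.2 p.1 q.1 else 0

/-- Controlled flip of the `k`-th graph qubit, controlled by the coin qubit. -/
def flipC (n : ℕ) (k : Fin n) :
    Matrix (ZMod 2 × (Fin n → ZMod 2)) (ZMod 2 × (Fin n → ZMod 2)) ℂ :=
  Matrix.of fun p q =>
    if p.1 = q.1 ∧ p.2 = q.2 + q.1 • (Pi.single k 1 : Fin n → ZMod 2) then 1 else 0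

/-- One quantum-walk evolution `U = W_{n-1} ⋯ W_1 W_0`, where `W_k = C_k · R_k`. -/
noncomputable def walkU (n : ℕ) (u : Fin n → ℝ × ℝ × ℝ) :
    Matrix (ZMod 2 × (Fin n → ZMod 2)) (ZMod 2 × (Fin n → ZMod 2)) ℂ :=
  ((List.finRange n).reverse.map (fun k => flipC n k * coinR n (u k))).prod

/-- The bit `K_{ℓ-1}` of an `n`-bit string, with a prescribed value `d` for `K_{-1}`. -/
def prevBitD (n : ℕ) (K : Fin n → ZMod 2) (d : ZMod 2) (ℓ : Fin n) : ZMod 2 :=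
  if 0 < (ℓ : ℕ) then K ⟨(ℓ : ℕ) - 1, lt_of_le_of_lt (Nat.sub_le _ _) ℓ.isLt⟩ else d

/-- The bit `I_{n-1}` of an `n`-bit string, with the convention `I_{-1} = 0` (for `n = 0`). -/
def lastBit (n : ℕ) (I : Fin n → ZMod 2) : ZMod 2 :=
  if h : 0 < n then I ⟨n - 1, Nat.sub_lt h Nat.one_pos⟩ else 0

/-- The two-evolution amplitude
`f(I,K) = (∏_ℓ [U3(u_ℓ)]_{I_ℓ,I_{ℓ-1}}) (∏_ℓ [U3(u_ℓ)]_{K_ℓ,K_{ℓ-1}})`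
with the conventions `I_{-1} = K_{n-1}` and `K_{-1} = 0`. -/
noncomputable def fTwo (n : ℕ) (u : Fin n → ℝ × ℝ × ℝ) (I K : Fin n → ZMod 2) : ℂ :=
  (∏ ℓ : Fin n,
      U3 (u ℓ).1 (u ℓ).2.1 (u ℓ).2.2 (I ℓ) (prevBitD n I (lastBit n K) ℓ)) *
  (∏ ℓ : Fin n,
      U3 (u ℓ).1 (u ℓ).2.1 (u ℓ).2.2 (K ℓ) (prevBitD n K 0 ℓ))
section Aux
variable {n : ℕ}

lemma add2_cancel (a b : Fin n → ZMod 2) : a + b + b = a := by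
  funext i
  rw [Pi.add_apply, Pi.add_apply, add_assoc, CharTwo.add_self_eq_zero, add_zero]

lemma W_entry (k : Fin n) (v : ℝ × ℝ × ℝ) (p q : ZMod 2 × (Fin n → ZMod 2)) :
    (flipC n k * coinR n v) p q =
      if p.2 = q.2 + p.1 • (Pi.single k 1 : Fin n → ZMod 2) then
        U3 v.1 v.2.1 v.2.2 p.1 q.1 else 0 := by
  rw [Matrix.mul_apply,
    Finset.sum_eq_single (p.1, p.2 + p.1 • (Pi.single k 1 : Fin n → ZMod 2))]
  · by_cases h : p.2 = q.2 + p.1 • (Pi.single k 1 : Fin n → ZMod 2)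
    · have hM : p.2 + p.1 • (Pi.single k 1 : Fin n → ZMod 2) = q.2 := by
        rw [h, add2_cancel]
      simp [flipC, coinR, hM, h, add2_cancel]
    · have hM : ¬(p.2 + p.1 • (Pi.single k 1 : Fin n → ZMod 2) = q.2) := fun hc =>
        h (by rw [← hc, add2_cancel])
      simp [flipC, coinR, hM, h, add2_cancel]
  · rintro ⟨b, M⟩ - hb
    have hn : ¬(p.1 = b ∧ p.2 = M + b • (Pi.single k 1 : Fin n → ZMod 2)) := by
      rintro ⟨h1, h2⟩
      subst h1
      have hM2 : M = p.2 + p.1 • (Pi.single k 1 : Fin n → ZMod 2) := by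
        rw [h2, add2_cancel]
      exact hb (by rw [hM2])
    simp [flipC, hn]
  · simp

/-- Product of the first `m` walk factors. -/
noncomputable def walkP (n : ℕ) (u : Fin n → ℝ × ℝ × ℝ) (m : ℕ) :
    Matrix (ZMod 2 × (Fin n → ZMod 2)) (ZMod 2 × (Fin n → ZMod 2)) ℂ :=
  (((List.finRange n).take m).reverse.map (fun k => flipC n k * coinR n (u k))).prod

lemma walkP_zero (u : Fin n → ℝ × ℝ × ℝ) : walkP n u 0 = 1 := rfl

lemma walkP_succ (u : Fin n → ℝ × ℝ × ℝ) (m : ℕ) (hm : m < n) :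
    walkP n u (m + 1) =
      (flipC n ⟨m, hm⟩ * coinR n (u ⟨m, hm⟩)) * walkP n u m := by
  have hlen : m < (List.finRange n).length := by simpa using hm
  rw [walkP, List.take_succ, List.getElem?_eq_getElem hlen]
  simp [walkP, List.finRange]

lemma walkP_top (u : Fin n → ℝ × ℝ × ℝ) : walkP n u n = walkU n u := by
  rw [walkP, walkU, List.take_of_length_le (by simp)]

lemma zmod2_solve : ∀ a b c : ZMod 2, (a + c = b ↔ c = a + b) := by decide

lemma prefix_entry (u : Fin n → ℝ × ℝ × ℝ) :
    ∀ (m : ℕ) (hm : m ≤ n) (c' c : ZMod 2) (J' J : Fin n → ZMod 2),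
    walkP n u m (c', J') (c, J) =
      if (∀ ℓ : Fin n, m ≤ (ℓ : ℕ) → J' ℓ = J ℓ) ∧
          c' = (if h : 0 < m then (J' + J) ⟨m - 1, by omega⟩ else c) then
        ∏ ℓ ∈ Finset.univ.filter (fun ℓ : Fin n => (ℓ : ℕ) < m),
          U3 (u ℓ).1 (u ℓ).2.1 (u ℓ).2.2 ((J' + J) ℓ) (prevBitD n (J' + J) c ℓ)
      else 0 := by
  intro m
  induction m with
  | zero =>
    intro hm c' c J' J
    rw [walkP_zero, Matrix.one_apply]
    simp [Prod.ext_iff, funext_iff, and_comm]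
  | succ m ih =>
    intro hm1 c' c J' J
    have hm : m < n := hm1
    set km : Fin n := ⟨m, hm⟩ with hkm
    set s : Fin n → ZMod 2 := Pi.single km 1 with hs
    set M₀ : Fin n → ZMod 2 := J' + c' • s with hM₀
    set b₀ : ZMod 2 := if h : 0 < m then (M₀ + J) ⟨m - 1, by omega⟩ else c with hb₀
    have hsval : ∀ ℓ : Fin n, s ℓ = if ℓ = km then 1 else 0 := by
      intro ℓ; rw [hs]; rw [Pi.single_apply]
    have hMJ : ∀ ℓ : Fin n, (ℓ : ℕ) ≠ m → (M₀ + J) ℓ = (J' + J) ℓ := by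
      intro ℓ hℓ
      have : s ℓ = 0 := by rw [hsval, if_neg]; intro h; exact hℓ (by rw [h])
      simp [hM₀, this]
    rw [walkP_succ u m hm, Matrix.mul_apply]
    have key : ∀ y : ZMod 2 × (Fin n → ZMod 2),
        (flipC n km * coinR n (u km)) (c', J') y * walkP n u m y (c, J) =
        if y = (b₀, M₀) then
          (if (∀ ℓ : Fin n, m ≤ (ℓ : ℕ) → M₀ ℓ = J ℓ) then
            U3 (u km).1 (u km).2.1 (u km).2.2 c' b₀ *
              ∏ ℓ ∈ Finset.univ.filter (fun ℓ : Fin n => (ℓ : ℕ) < m),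
                U3 (u ℓ).1 (u ℓ).2.1 (u ℓ).2.2 ((M₀ + J) ℓ)
                  (prevBitD n (M₀ + J) c ℓ)
          else 0)
        else 0 := by
      rintro ⟨b, M⟩
      rw [W_entry, ih (le_of_lt hm) b c M J]
      by_cases hMM : M = M₀
      · subst hMM
        have hcond : J' = M₀ + c' • s := by rw [hM₀, add2_cancel]
        rw [if_pos hcond]
        by_cases hb : b = b₀
        · subst hb
          rw [if_pos rfl]
          by_cases hcc : ∀ ℓ : Fin n, m ≤ (ℓ : ℕ) → M₀ ℓ = J ℓ
          · rw [if_pos (⟨hcc, hb₀⟩ :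
              _ ∧ b₀ = if h : 0 < m then (M₀ + J) ⟨m - 1, by omega⟩ else c),
              if_pos hcc]
          · have h1 : ¬((∀ ℓ : Fin n, m ≤ (ℓ : ℕ) → M₀ ℓ = J ℓ) ∧
                b₀ = if h : 0 < m then (M₀ + J) ⟨m - 1, by omega⟩ else c) :=
              fun h => hcc h.1
            rw [if_neg h1, if_neg hcc, mul_zero]
        · have h1 : ((b, M₀) : ZMod 2 × (Fin n → ZMod 2)) ≠ (b₀, M₀) :=
            fun h => hb (congrArg Prod.fst h)
          have h2 : ¬((∀ ℓ : Fin n, m ≤ (ℓ : ℕ) → M₀ ℓ = J ℓ) ∧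
              b = if h : 0 < m then (M₀ + J) ⟨m - 1, by omega⟩ else c) :=
            fun h => hb (h.2.trans hb₀.symm)
          rw [if_neg h2, if_neg h1, mul_zero]
      · have h0 : ¬(J' = M + c' • s) := by
          intro h
          exact hMM (by rw [hM₀, h, add2_cancel])
        have h1 : ((b, M) : ZMod 2 × (Fin n → ZMod 2)) ≠ (b₀, M₀) := by
          intro h
          exact hMM (congrArg Prod.snd h)
        rw [if_neg h0, if_neg h1, zero_mul]
    rw [Finset.sum_congr rfl (fun y _ => key y),
      Finset.sum_ite_eq' Finset.univ ((b₀, M₀) : ZMod 2 × (Fin n → ZMod 2)),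
      if_pos (Finset.mem_univ _)]
    have hprev : ∀ ℓ : Fin n, (ℓ : ℕ) < m →
        prevBitD n (M₀ + J) c ℓ = prevBitD n (J' + J) c ℓ := by
      intro ℓ hℓ
      unfold prevBitD
      by_cases h : 0 < (ℓ : ℕ)
      · rw [if_pos h, if_pos h, hMJ _ (by show (ℓ : ℕ) - 1 ≠ m; omega)]
      · rw [if_neg h, if_neg h]
    have hcond_iff : (∀ ℓ : Fin n, m ≤ (ℓ : ℕ) → M₀ ℓ = J ℓ) ↔
        ((∀ ℓ : Fin n, m + 1 ≤ (ℓ : ℕ) → J' ℓ = J ℓ) ∧ c' = (J' + J) km) := by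
      constructor
      · intro h
        constructor
        · intro ℓ hℓ
          have h2 := h ℓ (by omega)
          have hsl : s ℓ = 0 := by
            rw [hsval, if_neg]
            intro he
            rw [he] at hℓ
            simp only [hkm] at hℓ
            omega
          rw [hM₀] at h2
          simpa [hsl] using h2
        · have h2 := h km (le_refl m)
          rw [hM₀] at h2
          have hsk : s km = 1 := by rw [hsval, if_pos rfl]
          simp only [Pi.add_apply, Pi.smul_apply, hsk, smul_eq_mul, mul_one] at h2
          simp only [Pi.add_apply]
          exact (zmod2_solve _ _ _).mp h2
      · rintro ⟨h1, h2⟩ ℓ hℓ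
        by_cases he : ℓ = km
        · have hsk : s km = 1 := by rw [hsval, if_pos rfl]
          rw [he, hM₀]
          simp only [Pi.add_apply, Pi.smul_apply, hsk, smul_eq_mul, mul_one]
          simp only [Pi.add_apply] at h2
          exact (zmod2_solve _ _ _).mpr h2
        · have hne : (ℓ : ℕ) ≠ m := fun hc => he (Fin.ext hc)
          have hsl : s ℓ = 0 := by
            rw [hsval, if_neg he]
          rw [hM₀]
          simp only [Pi.add_apply, Pi.smul_apply, hsl, smul_zero, add_zero]
          exact h1 ℓ (by omega)
    have hdpos : (if h : 0 < m + 1 then (J' + J) ⟨m + 1 - 1, by omega⟩ else c) =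
        (J' + J) km := by
      rw [dif_pos (Nat.succ_pos m)]
      exact congrArg _ (Fin.ext (show m + 1 - 1 = m by omega))
    by_cases hC : ∀ ℓ : Fin n, m ≤ (ℓ : ℕ) → M₀ ℓ = J ℓ
    · have hc' : c' = (J' + J) km := (hcond_iff.mp hC).2
      rw [if_pos hC, if_pos ⟨(hcond_iff.mp hC).1, by rw [hdpos]; exact hc'⟩]
      have hfilter : Finset.univ.filter (fun ℓ : Fin n => (ℓ : ℕ) < m + 1) =
          insert km (Finset.univ.filter (fun ℓ : Fin n => (ℓ : ℕ) < m)) := by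
        ext ℓ
        simp only [Finset.mem_filter, Finset.mem_insert, Finset.mem_univ, true_and,
          Fin.ext_iff, hkm]
        omega
      rw [hfilter, Finset.prod_insert (by simp [hkm])]
      congr 1
      · rw [hc']
        congr 1
        rw [hb₀]
        unfold prevBitD
        by_cases h : 0 < m
        · rw [dif_pos h, if_pos (show 0 < (km : ℕ) from h),
            hMJ _ (by show (km : ℕ) - 1 ≠ m; show m - 1 ≠ m; omega)]
        · rw [dif_neg h, if_neg (show ¬0 < (km : ℕ) from h)]
      · refine Finset.prod_congr rfl fun ℓ hℓ => ?_
        simp only [Finset.mem_filter, Finset.mem_univ, true_and] at hℓ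
        rw [hMJ ℓ (by omega), hprev ℓ hℓ]
    · rw [if_neg hC, if_neg]
      rintro ⟨h1, h2⟩
      exact hC (hcond_iff.mpr ⟨h1, by rw [← hdpos]; exact h2⟩)

lemma walkU_entry (u : Fin n → ℝ × ℝ × ℝ) (c' c : ZMod 2) (J' J : Fin n → ZMod 2) :
    walkU n u (c', J') (c, J) =
      if c' = (if h : 0 < n then (J' + J) ⟨n - 1, by omega⟩ else c) then
        ∏ ℓ : Fin n,
          U3 (u ℓ).1 (u ℓ).2.1 (u ℓ).2.2 ((J' + J) ℓ) (prevBitD n (J' + J) c ℓ)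
      else 0 := by
  rw [← walkP_top, prefix_entry u n le_rfl]
  have h1 : ∀ ℓ : Fin n, n ≤ (ℓ : ℕ) → J' ℓ = J ℓ :=
    fun ℓ hℓ => absurd ℓ.isLt (by omega)
  have h2 : Finset.univ.filter (fun ℓ : Fin n => (ℓ : ℕ) < n) = Finset.univ := by
    apply Finset.filter_true_of_mem
    intro ℓ _
    exact ℓ.isLt
  rw [h2, if_congr (and_iff_right h1) rfl rfl]

end Aux
theorem stmt_11 (n : ℕ) (u : Fin n → ℝ × ℝ × ℝ) (k : ZMod 2) (J' J : Fin n → ZMod 2) :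
    (walkU n u ^ 2) (k, J') (0, J) =
      ∑ I ∈ Finset.univ.filter (fun I : Fin n → ZMod 2 => lastBit n I = k),
        fTwo n u I (I + J' + J) := by
  rw [pow_two, Matrix.mul_apply, Finset.sum_filter, Fintype.sum_prod_type_right]
  refine Fintype.sum_equiv (Equiv.addLeft J') _ _ ?_
  intro M
  have hK : J' + M + J' + J = M + J := by
    funext i
    have : ∀ a b c : ZMod 2, a + b + a + c = b + c := by decide
    simpa using this (J' i) (M i) (J i)
  show _ = if lastBit n (J' + M) = k then fTwo n u (J' + M) (J' + M + J' + J) else 0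
  rw [hK]
  rw [Finset.sum_eq_single (lastBit n (M + J))]
  · rw [walkU_entry, walkU_entry]
    have hy : lastBit n (M + J) =
        (if h : 0 < n then (M + J) ⟨n - 1, by omega⟩ else (0 : ZMod 2)) := by
      unfold lastBit
      rfl
    rw [if_pos hy]
    have hcond : (if h : 0 < n then (J' + M) ⟨n - 1, by omega⟩
        else lastBit n (M + J)) = lastBit n (J' + M) := by
      by_cases h : 0 < n
      · rw [dif_pos h]
        unfold lastBit
        rw [dif_pos h]
      · rw [dif_neg h]
        unfold lastBit
        rw [dif_neg h, dif_neg h]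
    rw [hcond, ite_mul, zero_mul, if_congr eq_comm rfl rfl]
    rfl
  · intro c _ hc
    rw [walkU_entry (n := n) u c 0 M J, if_neg, mul_zero]
    intro h
    apply hc
    rw [h]
    unfold lastBit
    rfl
  · intro h
    exact absurd (Finset.mem_univ _) h
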